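/- Let I be a compact real interval, let f : I → ℝ be twice continuously differentiable, and let Γ = {(x, f(x)) : x ∈ I} be its graph. There is a constant c > 0, depending only on I and f, with the following property: for every positive integer N, if points P₀, …, P_k ∈ Γ ∩ Λ_N, with P_i = (x_i, y_i), are such that x₀, …, x_k all lie in an interval of length smaller than c·N^{−2/3}, then P₀, …, P_k lie on a single straight line. -/

import Mathlib

open Set

/-- Second order Taylor-type bound: if the derivative (within `Icc a b`) of `f` is
`C`-Lipschitz on `Icc a b`, then the linearization error at a point `p` is quadratically
small. -/
lemma quad_remainder_bound (a b C L p : ℝ) (f : ℝ → ℝ)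
    (hdf : ∀ x ∈ Icc a b, HasDerivWithinAt f (derivWithin f (Icc a b) x) (Icc a b) x)
    (hlip : ∀ x ∈ Icc a b, ∀ y ∈ Icc a b,
      |derivWithin f (Icc a b) y - derivWithin f (Icc a b) x| ≤ C * |y - x|)
    (hC0 : 0 ≤ C) (hp : p ∈ Icc a b) (z : ℝ) (hz : z ∈ Icc a b) (hpz : p ≤ z) (hzL : z - p ≤ L) :
    |f z - f p - (z - p) * derivWithin f (Icc a b) p| ≤ C * L * L := by
  set g := derivWithin f (Icc a b) with hg
  set R : ℝ → ℝ := fun x => f x - (x - p) * g p with hR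
  have hsub : Icc p z ⊆ Icc a b := Icc_subset_Icc hp.1 hz.2
  have hderiv : ∀ w ∈ Icc p z, HasDerivWithinAt R (g w - g p) (Icc p z) w := by
    intro w hw
    have h1 : HasDerivWithinAt f (g w) (Icc p z) w := (hdf w (hsub hw)).mono hsub
    have h2 : HasDerivWithinAt (fun x => (x - p) * g p) (1 * g p) (Icc p z) w :=
      (((hasDerivAt_id w).sub_const p).mul_const (g p)).hasDerivWithinAt
    have h3 := h1.sub h2
    rw [one_mul] at h3
    exact h3
  have hbound : ∀ w ∈ Icc p z, ‖g w - g p‖ ≤ C * L := by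
    intro w hw
    have h1 := hlip p hp w (hsub hw)
    have : |w - p| ≤ L := by
      rw [abs_of_nonneg (by linarith [hw.1])]
      linarith [hw.2]
    calc ‖g w - g p‖ = |g w - g p| := rfl
      _ ≤ C * |w - p| := h1
      _ ≤ C * L := by nlinarith [norm_nonneg (g w - g p), abs_nonneg (w-p)]
  have key := (convex_Icc p z).norm_image_sub_le_of_norm_hasDerivWithin_le hderiv hbound
    (left_mem_Icc.2 hpz) (right_mem_Icc.2 hpz)
  have : ‖R z - R p‖ = |f z - f p - (z - p) * g p| := by
    simp [hR]; ring_nf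
  rw [this] at key
  calc |f z - f p - (z - p) * g p| ≤ C * L * ‖z - p‖ := key
    _ ≤ C * L * L := by
        have hL0 : 0 ≤ L := le_trans (by linarith) hzL
        have : ‖z - p‖ ≤ L := by rw [Real.norm_eq_abs, abs_of_nonneg (by linarith)]; linarith
        exact mul_le_mul_of_nonneg_left this (by positivity)
open Set

theorem collinear_on_short_intervals (a b : ℝ) (f : ℝ → ℝ)
    (hf : ContDiffOn ℝ 2 f (Icc a b)) :
    ∃ c : ℝ, 0 < c ∧ ∀ N : ℕ, 0 < N → ∀ k : ℕ, ∀ P : Fin (k + 1) → ℝ × ℝ,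
      (∀ i, P i ∈ (fun x => (x, f x)) '' Icc a b ∩
          {p : ℝ × ℝ | ∃ s t : ℤ, p.1 = (s : ℝ) / N ∧ p.2 = (t : ℝ) / N}) →
      (∃ u v : ℝ, v - u < c * (N : ℝ) ^ (-(2:ℝ)/3) ∧ ∀ i, (P i).1 ∈ Icc u v) →
      Collinear ℝ (Set.range P) := by
  by_cases hab : a < b
  swap
  · refine ⟨1, one_pos, ?_⟩
    intro N hN k P hP _
    have hsing : ∀ i, P i = (a, f a) := by
      intro i
      obtain ⟨x, hx, hxe⟩ := (hP i).1
      have hxa : x = a := le_antisymm (hx.2.trans (not_lt.1 hab)) hx.1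
      rw [← hxe, hxa]
    refine Collinear.subset ?_ (collinear_singleton ℝ ((a : ℝ), f a))
    rintro _ ⟨i, rfl⟩
    simp [hsing i]
  have hs : UniqueDiffOn ℝ (Icc a b) := uniqueDiffOn_Icc hab
  set g := derivWithin f (Icc a b) with hgdef
  have hfd : DifferentiableOn ℝ f (Icc a b) := hf.differentiableOn (by norm_num)
  have hdf : ∀ x ∈ Icc a b, HasDerivWithinAt f (g x) (Icc a b) x :=
    fun x hx => (hfd x hx).hasDerivWithinAt
  have hg1 : ContDiffOn ℝ 1 g (Icc a b) := hf.derivWithin hs (by norm_num)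
  have hgd : DifferentiableOn ℝ g (Icc a b) := hg1.differentiableOn one_ne_zero
  have hgc : ContinuousOn (derivWithin g (Icc a b)) (Icc a b) :=
    hg1.continuousOn_derivWithin hs le_rfl
  obtain ⟨C0, hC0⟩ := isCompact_Icc.exists_bound_of_continuousOn hgc
  set C := max C0 0 with hCdef
  have hC : ∀ x ∈ Icc a b, ‖derivWithin g (Icc a b) x‖ ≤ C :=
    fun x hx => (hC0 x hx).trans (le_max_left _ _)
  have hCnn : 0 ≤ C := le_max_right _ _
  have hlip : ∀ x ∈ Icc a b, ∀ y ∈ Icc a b, |g y - g x| ≤ C * |y - x| := by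
    intro x hx y hy
    have := (convex_Icc a b).norm_image_sub_le_of_norm_hasDerivWithin_le
      (fun z hz => (hgd z hz).hasDerivWithinAt) hC hx hy
    simpa [Real.norm_eq_abs] using this
  have h4C : (0:ℝ) < 4 * C + 1 := by linarith
  refine ⟨(4 * C + 1) ^ (-(1:ℝ)/3), Real.rpow_pos_of_pos h4C _, ?_⟩
  set c : ℝ := (4 * C + 1) ^ (-(1:ℝ)/3) with hcdef
  have hc3 : c ^ (3:ℕ) = (4 * C + 1)⁻¹ := by
    rw [hcdef, ← Real.rpow_natCast ((4 * C + 1) ^ (-(1:ℝ)/3)) 3, ← Real.rpow_mul h4C.le,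
      show (-(1:ℝ)/3) * (3:ℕ) = -1 by push_cast; ring, Real.rpow_neg_one]
  intro N hN k P hP hUV
  obtain ⟨u, v, huv, hx⟩ := hUV
  have hNpos : (0:ℝ) < N := Nat.cast_pos.2 hN
  have hmem : ∀ i, (P i).1 ∈ Icc a b ∧ (P i).2 = f (P i).1 := by
    intro i
    obtain ⟨x, hxm, hxe⟩ := (hP i).1
    exact ⟨by rw [← hxe]; exact hxm, by rw [← hxe]⟩
  choose S T hS hT using fun i => (hP i).2
  obtain ⟨i0, -, hi0⟩ := Finset.exists_min_image Finset.univ (fun i => (P i).1)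
    ⟨0, Finset.mem_univ 0⟩
  set p := (P i0).1 with hpdef
  have hi0' : ∀ i, p ≤ (P i).1 := fun i => hi0 i (Finset.mem_univ i)
  set L := v - u with hLdef
  have hpu : u ≤ p := (hx i0).1
  have hL0 : 0 ≤ L := by
    have h1 := (hx i0).1; have h2 := (hx i0).2
    simp only [hLdef]; linarith
  have hxL : ∀ i, (P i).1 - p ≤ L := fun i => by
    have h1 := (hx i).2
    simp only [hLdef]; linarith
  have ht3 : ((N:ℝ) ^ (-(2:ℝ)/3)) ^ (3:ℕ) = ((N:ℝ)^2)⁻¹ := by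
    rw [← Real.rpow_natCast ((N:ℝ) ^ (-(2:ℝ)/3)) 3, ← Real.rpow_mul (Nat.cast_nonneg N),
      show (-(2:ℝ)/3) * (3:ℕ) = ((-2:ℤ):ℝ) by push_cast; ring, Real.rpow_intCast]
    rw [zpow_neg, show ((2:ℤ)) = ((2:ℕ):ℤ) by norm_num, zpow_natCast]
  have hL3 : L ^ (3:ℕ) ≤ c ^ (3:ℕ) * ((N:ℝ)^2)⁻¹ := by
    have := pow_le_pow_left₀ hL0 huv.le 3
    calc L ^ (3:ℕ) ≤ (c * (N:ℝ) ^ (-(2:ℝ)/3)) ^ (3:ℕ) := this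
      _ = c ^ (3:ℕ) * ((N:ℝ) ^ (-(2:ℝ)/3)) ^ (3:ℕ) := by ring
      _ = c ^ (3:ℕ) * ((N:ℝ)^2)⁻¹ := by rw [ht3]
  -- determinants vanish
  have hD : ∀ i j, ((P i).1 - p) * ((P j).2 - (P i0).2)
      - ((P j).1 - p) * ((P i).2 - (P i0).2) = 0 := by
    intro i j
    have hRi := quad_remainder_bound a b C L p f hdf hlip hCnn (hmem i0).1
      ((P i).1) (hmem i).1 (hi0' i) (hxL i)
    have hRj := quad_remainder_bound a b C L p f hdf hlip hCnn (hmem i0).1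
      ((P j).1) (hmem j).1 (hi0' j) (hxL j)
    set D := ((P i).1 - p) * ((P j).2 - (P i0).2)
      - ((P j).1 - p) * ((P i).2 - (P i0).2) with hDdef
    have hidD : D = ((P i).1 - p) * (f ((P j).1) - f p - ((P j).1 - p) * g p)
        - ((P j).1 - p) * (f ((P i).1) - f p - ((P i).1 - p) * g p) := by
      rw [hDdef, (hmem i).2, (hmem j).2, (hmem i0).2]; ring
    have h1 : |(P i).1 - p| ≤ L := by
      rw [abs_of_nonneg (by linarith [hi0' i])]; exact hxL i
    have h2 : |(P j).1 - p| ≤ L := by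
      rw [abs_of_nonneg (by linarith [hi0' j])]; exact hxL j
    have habs : |D| ≤ 2 * C * L ^ (3:ℕ) := by
      rw [hidD]
      calc |((P i).1 - p) * (f ((P j).1) - f p - ((P j).1 - p) * g p)
          - ((P j).1 - p) * (f ((P i).1) - f p - ((P i).1 - p) * g p)|
          ≤ |((P i).1 - p) * (f ((P j).1) - f p - ((P j).1 - p) * g p)|
            + |((P j).1 - p) * (f ((P i).1) - f p - ((P i).1 - p) * g p)| := abs_sub _ _
        _ = |(P i).1 - p| * |f ((P j).1) - f p - ((P j).1 - p) * g p|
            + |(P j).1 - p| * |f ((P i).1) - f p - ((P i).1 - p) * g p| := by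
            rw [abs_mul, abs_mul]
        _ ≤ L * (C * L * L) + L * (C * L * L) := by
            gcongr <;> first | exact abs_nonneg _ | positivity
        _ = 2 * C * L ^ (3:ℕ) := by ring
    set M : ℤ := (S i - S i0) * (T j - T i0) - (S j - S i0) * (T i - T i0) with hMdef
    have hDlat : D = (M:ℝ) / (N:ℝ)^2 := by
      have e0 : p = (S i0 : ℝ) / N := hS i0
      rw [hDdef, hMdef, hS i, hS j, e0, hT i, hT j, hT i0]
      push_cast
      field_simp
    have hMabs : (|M|:ℝ) < 1 := by
      have hDabs : |D| = (|M|:ℝ) / (N:ℝ)^2 := by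
        rw [hDlat, abs_div, ← Int.cast_abs, abs_of_pos (by positivity : (0:ℝ) < (N:ℝ)^2)]
      have h3 : (|M|:ℝ) = |D| * (N:ℝ)^2 := by
        rw [hDabs]; field_simp
      rw [h3]
      have h4 : |D| * (N:ℝ)^2 ≤ 2 * C * (c ^ (3:ℕ) * ((N:ℝ)^2)⁻¹) * (N:ℝ)^2 := by
        have : |D| ≤ 2 * C * (c ^ (3:ℕ) * ((N:ℝ)^2)⁻¹) := by
          refine habs.trans ?_
          have := mul_le_mul_of_nonneg_left hL3 (by linarith : (0:ℝ) ≤ 2 * C)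
          linarith
        exact mul_le_mul_of_nonneg_right this (by positivity)
      have h5 : 2 * C * (c ^ (3:ℕ) * ((N:ℝ)^2)⁻¹) * (N:ℝ)^2 = 2 * C * (4 * C + 1)⁻¹ := by
        rw [hc3]; field_simp
      rw [h5] at h4
      have h6 : 2 * C * (4 * C + 1)⁻¹ < 1 := by
        rw [mul_inv_lt_iff₀ h4C]
        linarith
      linarith
    have hM0 : M = 0 := by
      have h := abs_lt.mp (by exact_mod_cast hMabs : |M| < 1)
      omega
    rw [hDlat, hM0]
    simp
  -- conclude collinearity
  by_cases hall : ∀ i, (P i).1 = p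
  · have hPi : ∀ i, P i = (p, f p) := by
      intro i
      obtain ⟨x, hxm, hxe⟩ := (hP i).1
      have h1 : (P i).1 = x := by rw [← hxe]
      have hxp : x = p := by rw [← h1]; exact hall i
      rw [← hxe, hxp]
    refine Collinear.subset ?_ (collinear_singleton ℝ (p, f p))
    rintro _ ⟨i, rfl⟩
    simp [hPi i]
  · push_neg at hall
    obtain ⟨m, hm⟩ := hall
    rw [collinear_iff_of_mem (Set.mem_range_self i0)]
    refine ⟨P m - P i0, ?_⟩
    rintro _ ⟨i, rfl⟩
    have hne : (P m).1 - p ≠ 0 := sub_ne_zero.2 hm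
    refine ⟨((P i).1 - p) / ((P m).1 - p), ?_⟩
    have hDmi := hD m i
    apply Prod.ext
    · show (P i).1 = ((P i).1 - p) / ((P m).1 - p) * ((P m).1 - p) + p
      field_simp
      ring
    · show (P i).2 = ((P i).1 - p) / ((P m).1 - p) * ((P m).2 - (P i0).2) + (P i0).2
      have key : ((P i).1 - p) * ((P m).2 - (P i0).2)
          = ((P m).1 - p) * ((P i).2 - (P i0).2) := by linarith [hDmi]
      rw [div_mul_eq_mul_div, key, mul_div_cancel_left₀ _ hne]
      ring
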